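/- arXiv:2310.05775 — 4 statements merged into one kernel-verified Lean document; each statement's English description precedes it below -/
import Mathlib

section
/- Let v ∈ ℝ^n be a vector having at least S magnitudes, i.e., there exist S nonzero entries of v with pairwise distinct magnitudes (where the magnitude of a nonzero real x is the integer j with 10^j ≤ |x| < 10^{j+1}). Let p ∈ [1/3, 2/3]^n and let w ∈ {±1}^n be a random vector with independent entries where w_i = 1 with probability p_i and w_i = -1 with probability 1 - p_i. Then for any α ∈ ℝ, the probability that ⟨v, w⟩ = α is at most (2/3)^{⌈S/2⌉}. -/
/-- The magnitude of a nonzero real `x`: the unique integer `j` with `10^j ≤ |x| < 10^(j+1)`. -/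
noncomputable def mag (x : ℝ) : ℤ := ⌊Real.logb 10 |x|⌋

lemma mag_le_abs {x : ℝ} (hx : x ≠ 0) : (10:ℝ) ^ (mag x) ≤ |x| := by
  have hx' : (0:ℝ) < |x| := abs_pos.2 hx
  have h : (10:ℝ) ^ (Real.logb 10 |x|) = |x| := Real.rpow_logb (by norm_num) (by norm_num) hx'
  calc (10:ℝ) ^ (mag x) = (10:ℝ) ^ ((mag x : ℝ)) := by
        rw [Real.rpow_intCast]
    _ ≤ (10:ℝ) ^ (Real.logb 10 |x|) :=
        Real.rpow_le_rpow_of_exponent_le (by norm_num) (Int.floor_le _)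
    _ = |x| := h

lemma abs_lt_mag {x : ℝ} (hx : x ≠ 0) : |x| < (10:ℝ) ^ (mag x + 1) := by
  have hx' : (0:ℝ) < |x| := abs_pos.2 hx
  have h : (10:ℝ) ^ (Real.logb 10 |x|) = |x| := Real.rpow_logb (by norm_num) (by norm_num) hx'
  calc |x| = (10:ℝ) ^ (Real.logb 10 |x|) := h.symm
    _ < (10:ℝ) ^ ((mag x + 1 : ℤ) : ℝ) := by
        apply Real.rpow_lt_rpow_of_exponent_lt (by norm_num)
        push_cast
        exact Int.lt_floor_add_one _
    _ = (10:ℝ) ^ (mag x + 1) := by rw [Real.rpow_intCast]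

lemma sumA {ι : Type*} [DecidableEq ι] (v : ι → ℝ) :
    ∀ (k : ℕ) (F : Finset ι) (M : ℤ), F.card = k →
    (∀ i ∈ F, v i ≠ 0) → (∀ i ∈ F, mag (v i) ≤ M) →
    (∀ i ∈ F, ∀ j ∈ F, i ≠ j → 2 ≤ |mag (v i) - mag (v j)|) →
    ∑ i ∈ F, |v i| < (100/99) * (10:ℝ) ^ (M+1) := by
  intro k
  induction k with
  | zero =>
    intro F M hc _ _ _
    rw [Finset.card_eq_zero] at hc
    subst hc
    simp
    positivity
  | succ k ih =>
    intro F M hc h0 hle hgap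
    have hne : F.Nonempty := Finset.card_pos.1 (by omega)
    obtain ⟨i₀, hi₀, hmax⟩ := F.exists_max_image (fun i => mag (v i)) hne
    have hrest : ∀ i ∈ F.erase i₀, mag (v i) ≤ M - 2 := by
      intro i hi
      have hiF := Finset.mem_of_mem_erase hi
      have hne' : i ≠ i₀ := Finset.ne_of_mem_erase hi
      have h2 := hgap i hiF i₀ hi₀ hne'
      have h3 := hmax i hiF
      have h4 := hle i₀ hi₀
      rcases le_abs.1 h2 with h|h <;> omega
    have hsum : ∑ i ∈ F.erase i₀, |v i| < (100/99) * (10:ℝ) ^ (M-1) := by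
      have := ih (F.erase i₀) (M-2) (by rw [Finset.card_erase_of_mem hi₀, hc]; rfl)
        (fun i hi => h0 i (Finset.mem_of_mem_erase hi))
        (fun i hi => by have := hrest i hi; omega)
        (fun i hi j hj hij => hgap i (Finset.mem_of_mem_erase hi) j (Finset.mem_of_mem_erase hj) hij)
      convert this using 3
      omega
    have hi0lt : |v i₀| < (10:ℝ) ^ (M+1) := by
      calc |v i₀| < (10:ℝ) ^ (mag (v i₀) + 1) := abs_lt_mag (h0 i₀ hi₀)
        _ ≤ (10:ℝ) ^ (M+1) := by
            apply zpow_le_zpow_right₀ (by norm_num)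
            have := hle i₀ hi₀; omega
    rw [← Finset.sum_erase_add F _ hi₀]
    have hpow : (10:ℝ) ^ (M+1) = 100 * (10:ℝ) ^ (M-1) := by
      rw [show M + 1 = 2 + (M - 1) by ring, zpow_add₀ (by norm_num : (10:ℝ) ≠ 0)]
      norm_num
    have hpos : (0:ℝ) < (10:ℝ) ^ (M-1) := by positivity
    rw [hpow] at hi0lt ⊢
    nlinarith

lemma inj_signs {n : ℕ} (v : Fin n → ℝ) (P : Fin n → Prop) [DecidablePred P]
    (h0 : ∀ i, P i → v i ≠ 0)
    (hgap : ∀ i, P i → ∀ j, P j → i ≠ j → 2 ≤ |mag (v i) - mag (v j)|)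
    (ρ ρ' : {i // P i} → Bool)
    (h : ∑ i : {i // P i}, v i * (if ρ i then 1 else -1)
       = ∑ i : {i // P i}, v i * (if ρ' i then 1 else -1)) :
    ρ = ρ' := by
  by_contra hne
  set g : {i // P i} → ℝ :=
    fun i => v i * ((if ρ i then (1:ℝ) else -1) - (if ρ' i then 1 else -1)) with hg
  have hgsum : ∑ i : {i // P i}, g i = 0 := by
    simp only [hg, mul_sub]
    rw [Finset.sum_sub_distrib, h, sub_self]
  set D : Finset {i // P i} := Finset.univ.filter (fun i => ρ i ≠ ρ' i) with hD
  have hDne : D.Nonempty := by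
    rcases Function.ne_iff.1 hne with ⟨i, hi⟩
    exact ⟨i, by simp [hD, hi]⟩
  have hgD : ∀ i, i ∉ D → g i = 0 := by
    intro i hi
    simp only [hD, Finset.mem_filter, Finset.mem_univ, true_and, not_not] at hi
    simp [hg, hi]
  have hDsum : ∑ i ∈ D, g i = 0 := by
    rw [← hgsum]
    exact Finset.sum_subset (Finset.subset_univ D) (fun i _ hi => hgD i hi)
  have habs : ∀ i ∈ D, |g i| = 2 * |v i| := by
    intro i hi
    simp only [hD, Finset.mem_filter, Finset.mem_univ, true_and] at hi
    rw [hg]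
    rcases Bool.eq_false_or_eq_true (ρ i) with h1 | h1 <;>
      rcases Bool.eq_false_or_eq_true (ρ' i) with h2 | h2 <;>
      simp [h1, h2] at hi ⊢ <;> norm_num <;> ring
  obtain ⟨i₀, hi₀, hmax⟩ := D.exists_max_image (fun i => mag (v i.val)) hDne
  have hPi₀ : P i₀.val := i₀.2
  have hkey : |g i₀| ≤ ∑ i ∈ D.erase i₀, |g i| := by
    have : g i₀ = -∑ i ∈ D.erase i₀, g i := by
      have := Finset.sum_erase_add D g hi₀
      linarith [this, hDsum]
    rw [this, abs_neg]
    exact Finset.abs_sum_le_sum_abs _ _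
  have hD0 : ∀ i ∈ D, v i.val ≠ 0 := fun i _ => h0 i.val i.2
  have hrest : ∑ i ∈ D.erase i₀, |v i.val| < (100/99) * (10:ℝ) ^ (mag (v i₀.val) - 1) := by
    have := sumA (fun i : {i // P i} => v i.val) (D.erase i₀).card (D.erase i₀)
      (mag (v i₀.val) - 2) rfl
      (fun i hi => hD0 i (Finset.mem_of_mem_erase hi))
      (fun i hi => by
        have hiD := Finset.mem_of_mem_erase hi
        have hne' : i ≠ i₀ := Finset.ne_of_mem_erase hi
        have h2 := hgap i.val i.2 i₀.val i₀.2 (fun hv => hne' (Subtype.ext hv))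
        have h3 := hmax i hiD
        rcases le_abs.1 h2 with hx | hx <;> simp at hx h3 ⊢ <;> omega)
      (fun i hi j hj hij => hgap i.val i.2 j.val j.2 (fun hv => hij (Subtype.ext hv)))
    convert this using 3
    omega
  have hsum_abs : ∑ i ∈ D.erase i₀, |g i| = 2 * ∑ i ∈ D.erase i₀, |v i.val| := by
    rw [Finset.mul_sum]
    exact Finset.sum_congr rfl (fun i hi => habs i (Finset.mem_of_mem_erase hi))
  have h1 : (10:ℝ) ^ (mag (v i₀.val)) ≤ |v i₀.val| := mag_le_abs (h0 i₀.val hPi₀)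
  have h2 : |g i₀| = 2 * |v i₀.val| := habs i₀ hi₀
  have hpow : (10:ℝ) ^ (mag (v i₀.val)) = 10 * (10:ℝ) ^ (mag (v i₀.val) - 1) := by
    rw [show mag (v i₀.val) = 1 + (mag (v i₀.val) - 1) by ring,
      zpow_add₀ (by norm_num : (10:ℝ) ≠ 0)]
    norm_num
  have hpos : (0:ℝ) < (10:ℝ) ^ (mag (v i₀.val) - 1) := by positivity
  nlinarith

lemma ceil_half_bound (S : ℕ) : 2 * ⌈(S:ℝ)/2⌉₊ ≤ S + 1 := by
  have h1 : (⌈(S:ℝ)/2⌉₊ : ℝ) < (S:ℝ)/2 + 1 := Nat.ceil_lt_add_one (by positivity)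
  have h2 : (2 * ⌈(S:ℝ)/2⌉₊ : ℝ) < S + 2 := by push_cast; linarith
  exact_mod_cast by exact_mod_cast Nat.lt_succ_iff.1 (by exact_mod_cast h2 : 2 * ⌈(S:ℝ)/2⌉₊ < S + 2)

lemma select {n : ℕ} (v : Fin n → ℝ) (T : Finset (Fin n)) (S : ℕ) (hS : 0 < S)
    (hcard : T.card = S)
    (hinj : Set.InjOn (fun i => mag (v i)) (T : Set (Fin n))) :
    ∃ T' : Finset (Fin n), T' ⊆ T ∧ T'.card = ⌈(S:ℝ)/2⌉₊ ∧
      ∀ i ∈ T', ∀ j ∈ T', i ≠ j → 2 ≤ |mag (v i) - mag (v j)| := by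
  set m := ⌈(S:ℝ)/2⌉₊ with hm
  have hm2 : 2 * m ≤ S + 1 := ceil_half_bound S
  set M : Finset ℤ := T.image (fun i => mag (v i)) with hM
  have hMcard : M.card = S := by rw [hM, Finset.card_image_of_injOn hinj, hcard]
  set f := M.orderIsoOfFin hMcard with hf
  have hidx : ∀ k : Fin m, 2 * k.val < S := by
    intro k; have := k.2; omega
  set G : Fin m → ℤ := fun k => (f ⟨2 * k.val, hidx k⟩ : ℤ) with hG
  have hGmem : ∀ k, G k ∈ M := fun k => (f _).2
  have haux : ∀ k k' : Fin m, k.val < k'.val → G k + 2 ≤ G k' := by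
    intro k k' hkk
    have hmid : 2 * k.val + 1 < S := by have := k'.2; omega
    have h1 : f ⟨2 * k.val, hidx k⟩ < f ⟨2 * k.val + 1, hmid⟩ := by
      apply f.strictMono; simp [Fin.lt_def]
    have h2 : f ⟨2 * k.val + 1, hmid⟩ < f ⟨2 * k'.val, hidx k'⟩ := by
      apply f.strictMono; simp [Fin.lt_def]; omega
    have h1' : (f ⟨2 * k.val, hidx k⟩ : ℤ) < (f ⟨2 * k.val + 1, hmid⟩ : ℤ) := h1
    have h2' : (f ⟨2 * k.val + 1, hmid⟩ : ℤ) < (f ⟨2 * k'.val, hidx k'⟩ : ℤ) := h2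
    simp only [hG]; omega
  have hGinj : Function.Injective G := by
    intro k k' hkk
    rcases lt_trichotomy k.val k'.val with h | h | h
    · have := haux k k' h; omega
    · exact Fin.ext h
    · have := haux k' k h; omega
  set M' : Finset ℤ := Finset.univ.image G with hM'
  have hM'card : M'.card = m := by
    rw [hM', Finset.card_image_of_injective _ hGinj, Finset.card_univ, Fintype.card_fin]
  have hM'sub : M' ⊆ M := by
    intro a ha
    rw [hM', Finset.mem_image] at ha
    obtain ⟨k, _, hk⟩ := ha
    exact hk ▸ hGmem k
  refine ⟨T.filter (fun i => mag (v i) ∈ M'), Finset.filter_subset _ _, ?_, ?_⟩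
  · have himg : (T.filter (fun i => mag (v i) ∈ M')).image (fun i => mag (v i)) = M' := by
      apply Finset.Subset.antisymm
      · intro a ha
        rw [Finset.mem_image] at ha
        obtain ⟨i, hi, rfl⟩ := ha
        exact (Finset.mem_filter.1 hi).2
      · intro a ha
        have haM : a ∈ M := hM'sub ha
        rw [hM, Finset.mem_image] at haM
        obtain ⟨i, hi, rfl⟩ := haM
        exact Finset.mem_image.2 ⟨i, Finset.mem_filter.2 ⟨hi, ha⟩, rfl⟩
    have := Finset.card_image_of_injOn
      (hinj.mono (by intro x hx; exact Finset.mem_coe.2 (Finset.mem_of_mem_filter x (Finset.mem_coe.1 hx))) :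
        Set.InjOn (fun i => mag (v i)) (T.filter (fun i => mag (v i) ∈ M') : Set (Fin n)))
    rw [himg, hM'card] at this
    omega
  · intro i hi j hj hij
    have hiT := Finset.mem_of_mem_filter i hi
    have hjT := Finset.mem_of_mem_filter j hj
    have hiM' := (Finset.mem_filter.1 hi).2
    have hjM' := (Finset.mem_filter.1 hj).2
    have hab : mag (v i) ≠ mag (v j) := fun h => hij (hinj hiT hjT h)
    rw [hM', Finset.mem_image] at hiM' hjM'
    obtain ⟨k, _, hk⟩ := hiM'
    obtain ⟨k', _, hk'⟩ := hjM'
    have hkk : k.val ≠ k'.val := by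
      intro h; apply hab; rw [← hk, ← hk']; congr 1; exact Fin.ext h
    rcases Nat.lt_or_ge k.val k'.val with h | h
    · have := haux k k' h; rw [hk, hk'] at this; rw [abs_sub_comm]; rw [le_abs]; left; omega
    · have := haux k' k (by omega); rw [hk, hk'] at this; rw [le_abs]; left; omega

lemma sum_one {α : Type*} [Fintype α] [DecidableEq α] (q : α → ℝ) :
    ∑ b : α → Bool, ∏ i, (if b i then q i else 1 - q i) = 1 := by
  have h := Finset.prod_univ_sum (fun _ : α => (Finset.univ : Finset Bool))
    (fun i t => if t then q i else 1 - q i)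
  rw [Fintype.piFinset_univ] at h
  rw [← h]
  simp

lemma inner_bound {n : ℕ} (v : Fin n → ℝ) (P : Fin n → Prop) [DecidablePred P]
    (p : Fin n → ℝ) (hp : ∀ i, 1/3 ≤ p i ∧ p i ≤ 2/3)
    (h0 : ∀ i, P i → v i ≠ 0)
    (hgap : ∀ i, P i → ∀ j, P j → i ≠ j → 2 ≤ |mag (v i) - mag (v j)|)
    (β : ℝ) :
    ∑ a : {i // P i} → Bool,
      (if (∑ i : {i // P i}, v i * (if a i then 1 else -1)) = β then
        ∏ i : {i // P i}, (if a i then p i else 1 - p i) else 0)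
      ≤ (2/3 : ℝ) ^ (Fintype.card {i // P i}) := by
  classical
  by_cases hex : ∃ a₀ : {i // P i} → Bool,
      (∑ i : {i // P i}, v i * (if a₀ i then 1 else -1)) = β
  · obtain ⟨a₀, ha₀⟩ := hex
    rw [Finset.sum_eq_single a₀]
    · rw [if_pos ha₀]
      calc ∏ i : {i // P i}, (if a₀ i then p i.val else 1 - p i.val)
          ≤ ∏ _i : {i // P i}, (2/3 : ℝ) := by
            apply Finset.prod_le_prod
            · intro i _
              rcases Bool.eq_false_or_eq_true (a₀ i) with h | h <;> simp [h] <;>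
                linarith [(hp i.val).1, (hp i.val).2]
            · intro i _
              rcases Bool.eq_false_or_eq_true (a₀ i) with h | h <;> simp [h] <;>
                linarith [(hp i.val).1, (hp i.val).2]
        _ = (2/3 : ℝ) ^ (Fintype.card {i // P i}) := by
            rw [Finset.prod_const, Finset.card_univ]
    · intro a _ hne
      rw [if_neg]
      intro hsum
      exact hne (inj_signs v P h0 hgap a a₀ (by rw [hsum, ha₀]))
    · intro h
      exact absurd (Finset.mem_univ a₀) h
  · push_neg at hex
    rw [Finset.sum_congr rfl (fun a _ => if_neg (hex a))]
    simp
    positivity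

/-- If `v` has at least `S` magnitudes, and `w ∈ {±1}^n` is a random vector with independent
entries where `w i = 1` with probability `p i ∈ [1/3, 2/3]`, then for any `α`,
`Pr[⟨v, w⟩ = α] ≤ (2/3)^⌈S/2⌉`. The probability is written explicitly as a sum over all
outcomes `σ : Fin n → Bool` (where `σ i = true` encodes `w i = 1`), weighted by the product
of the marginal probabilities (which is the joint distribution, by independence). -/
theorem stmt_2 (n S : ℕ) (hS : 0 < S) (v : Fin n → ℝ)
    (hmag : ∃ T : Finset (Fin n), T.card = S ∧ (∀ i ∈ T, v i ≠ 0) ∧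
      Set.InjOn (fun i => mag (v i)) (T : Set (Fin n)))
    (p : Fin n → ℝ) (hp : ∀ i, 1/3 ≤ p i ∧ p i ≤ 2/3) (α : ℝ) :
    ∑ σ : Fin n → Bool,
      (if (∑ i, v i * (if σ i then 1 else -1)) = α then
        ∏ i, (if σ i then p i else 1 - p i) else 0)
      ≤ (2/3 : ℝ) ^ ⌈(S : ℝ)/2⌉₊ := by
  classical
  obtain ⟨T, hTcard, hT0, hTinj⟩ := hmag
  obtain ⟨T', hT'sub, hT'card, hT'gap⟩ := select v T S hS hTcard hTinj
  obtain ⟨P, hPdef⟩ : ∃ P : Fin n → Prop, ∀ i, P i ↔ i ∈ T' :=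
    ⟨fun i => i ∈ T', fun i => Iff.rfl⟩
  have h0 : ∀ i, P i → v i ≠ 0 := fun i hi => hT0 i (hT'sub ((hPdef i).1 hi))
  have hgap : ∀ i, P i → ∀ j, P j → i ≠ j → 2 ≤ |mag (v i) - mag (v j)| :=
    fun i hi j hj hij => hT'gap i ((hPdef i).1 hi) j ((hPdef j).1 hj) hij
  have hcardP : Fintype.card {i // P i} = ⌈(S : ℝ)/2⌉₊ := by
    rw [← hT'card, Fintype.card_subtype]
    congr 1
    ext i
    simp [hPdef]
  set e := Equiv.piEquivPiSubtypeProd P (fun _ => Bool) with he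
  set F : (Fin n → Bool) → ℝ := fun σ =>
    if (∑ i, v i * (if σ i then 1 else -1)) = α then
      ∏ i, (if σ i then p i else 1 - p i) else 0 with hF
  have hsum : ∑ σ : Fin n → Bool, F σ
      = ∑ x : ({i // P i} → Bool) × ({i // ¬ P i} → Bool), F (e.symm x) :=
    (Equiv.sum_comp e.symm F).symm
  rw [hsum, Fintype.sum_prod_type_right]
  -- key facts about e.symm (a, b)
  have hval : ∀ (a : {i // P i} → Bool) (b : {i // ¬ P i} → Bool),
      (∀ i : {i // P i}, e.symm (a, b) i.val = a i)
      ∧ (∀ i : {i // ¬ P i}, e.symm (a, b) i.val = b i) := by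
    intro a b
    constructor
    · intro i
      simp [he, Equiv.piEquivPiSubtypeProd_symm_apply, i.2]
    · intro i
      simp [he, Equiv.piEquivPiSubtypeProd_symm_apply, i.2]
  have hterm : ∀ (a : {i // P i} → Bool) (b : {i // ¬ P i} → Bool),
      F (e.symm (a, b)) =
        (if (∑ i : {i // P i}, v i * (if a i then 1 else -1))
            = α - (∑ i : {i // ¬ P i}, v i * (if b i then 1 else -1)) then
          ∏ i : {i // P i}, (if a i then p i else 1 - p i) else 0)
        * ∏ i : {i // ¬ P i}, (if b i then p i else 1 - p i) := by
    intro a b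
    obtain ⟨h1, h2⟩ := hval a b
    have hs : ∑ i, v i * (if e.symm (a, b) i then 1 else -1)
        = (∑ i : {i // P i}, v i * (if a i then 1 else -1))
        + (∑ i : {i // ¬ P i}, v i * (if b i then 1 else -1)) := by
      rw [← Fintype.sum_subtype_add_sum_subtype P
        (fun i => v i * (if e.symm (a, b) i then 1 else -1))]
      congr 1
      · exact Finset.sum_congr rfl (fun i _ => by rw [h1 i])
      · exact Finset.sum_congr rfl (fun i _ => by rw [h2 i])
    have hq : ∏ i, (if e.symm (a, b) i then p i else 1 - p i)
        = (∏ i : {i // P i}, (if a i then p i else 1 - p i))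
        * ∏ i : {i // ¬ P i}, (if b i then p i else 1 - p i) := by
      rw [← Fintype.prod_subtype_mul_prod_subtype P
        (fun i => if e.symm (a, b) i then p i else 1 - p i)]
      congr 1
      · exact Finset.prod_congr rfl (fun i _ => by rw [h1 i])
      · exact Finset.prod_congr rfl (fun i _ => by rw [h2 i])
    rw [hF]
    simp only [hs, hq]
    by_cases hc : (∑ i : {i // P i}, v i * (if a i then 1 else -1))
        = α - (∑ i : {i // ¬ P i}, v i * (if b i then 1 else -1))
    · rw [if_pos hc, if_pos (by linarith)]
    · rw [if_neg hc, if_neg (by intro h; apply hc; linarith), zero_mul]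
  calc ∑ b : {i // ¬ P i} → Bool, ∑ a : {i // P i} → Bool, F (e.symm (a, b))
      ≤ ∑ b : {i // ¬ P i} → Bool,
          (2/3 : ℝ) ^ ⌈(S : ℝ)/2⌉₊ * ∏ i : {i // ¬ P i}, (if b i then p i else 1 - p i) := by
        apply Finset.sum_le_sum
        intro b _
        have hbnn : (0:ℝ) ≤ ∏ i : {i // ¬ P i}, (if b i then p i else 1 - p i) := by
          apply Finset.prod_nonneg
          intro i _
          rcases Bool.eq_false_or_eq_true (b i) with h | h <;> simp [h] <;>
            linarith [(hp i.val).1, (hp i.val).2]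
        rw [Finset.sum_congr rfl (fun a _ => hterm a b), ← Finset.sum_mul]
        apply mul_le_mul_of_nonneg_right _ hbnn
        have := inner_bound v P p hp h0 hgap
          (α - (∑ i : {i // ¬ P i}, v i * (if b i then 1 else -1)))
        rwa [hcardP] at this
    _ = (2/3 : ℝ) ^ ⌈(S : ℝ)/2⌉₊ := by
        rw [← Finset.mul_sum, sum_one (fun i : {i // ¬ P i} => p i.val), mul_one]
end

section
/- Let h_1, ..., h_k be hyperplanes in ℝ^n forming an essential cover of the hypercube {±1}^n, where h_i = {x ∈ ℝ^n : ⟨v_i, x⟩ = μ_i}. Then |supp(v_i)| ≤ 2k for every i ∈ [k]. -/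
/-- `IsEssentialCover n v μ` : the hyperplanes `h i = {x : ⟨v i, x⟩ = μ i}` form an essential
cover of the hypercube `{±1}^n`:
(E1) every vertex is covered; (E2) every coordinate appears with nonzero coefficient in some
hyperplane equation; (E3) every hyperplane covers a vertex not covered by any other. -/
def IsEssentialCover {ι : Type*} (n : ℕ) (v : ι → Fin n → ℝ) (μ : ι → ℝ) : Prop :=
  (∀ x : Fin n → ℝ, (∀ j, x j = 1 ∨ x j = -1) → ∃ i, ∑ j, v i j * x j = μ i) ∧
  (∀ j : Fin n, ∃ i, v i j ≠ 0) ∧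
  (∀ i, ∃ x : Fin n → ℝ, (∀ j, x j = 1 ∨ x j = -1) ∧ (∑ j, v i j * x j = μ i) ∧
    ∀ i', i' ≠ i → ∑ j, v i' j * x j ≠ μ i')

open Finset

section AuxLemmas

noncomputable def sg (b : Bool) : ℝ := if b then -1 else 1

lemma sg_sq (b : Bool) : sg b * sg b = 1 := by cases b <;> simp [sg]

lemma sum_chi_eq_zero {ι : Type*} [Fintype ι] [DecidableEq ι] {A : Finset ι}
    (hA : A.Nonempty) : ∑ ε : ι → Bool, ∏ j ∈ A, sg (ε j) = 0 := by
  have key : ∀ ε : ι → Bool, ∏ j ∈ A, sg (ε j) = ∏ j : ι, (if j ∈ A then sg (ε j) else 1) := by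
    intro ε
    rw [← Finset.prod_filter]
    apply Finset.prod_congr _ (fun _ _ => rfl)
    ext j; simp
  have hfac := Finset.prod_univ_sum (fun _ : ι => (Finset.univ : Finset Bool))
    (fun j b => if j ∈ A then sg b else 1)
  rw [Fintype.piFinset_univ] at hfac
  calc ∑ ε : ι → Bool, ∏ j ∈ A, sg (ε j)
      = ∑ ε : ι → Bool, ∏ j : ι, (if j ∈ A then sg (ε j) else 1) :=
        Finset.sum_congr rfl (fun ε _ => key ε)
    _ = ∏ j : ι, ∑ b ∈ (Finset.univ : Finset Bool), (if j ∈ A then sg b else 1) := hfac.symm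
    _ = 0 := by
        obtain ⟨a, ha⟩ := hA
        apply Finset.prod_eq_zero (Finset.mem_univ a)
        simp [ha, sg]

lemma af_aux {ι : Type*} [Fintype ι] [DecidableEq ι] :
    ∀ (L : List ((ι → ℝ) × ℝ)) (A : Finset ι), L.length < A.card →
    ∑ ε : ι → Bool,
      (L.map (fun g => (∑ j : ι, g.1 j * sg (ε j)) - g.2)).prod * ∏ j ∈ A, sg (ε j) = 0 := by
  intro L
  induction L with
  | nil =>
    intro A hA
    simp only [List.map_nil, List.prod_nil, one_mul]
    exact sum_chi_eq_zero (Finset.card_pos.mp (by omega))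
  | cons f L ih =>
    intro A hA
    simp only [List.length_cons] at hA
    have hA' : L.length < A.card := by omega
    have hswap : ∀ (j : ι) (ε : ι → Bool),
        sg (ε j) * ∏ a ∈ A, sg (ε a)
          = ∏ a ∈ (if j ∈ A then A.erase j else insert j A), sg (ε a) := by
      intro j ε
      by_cases hj : j ∈ A
      · rw [if_pos hj, ← Finset.mul_prod_erase A _ hj, ← mul_assoc, sg_sq, one_mul]
      · rw [if_neg hj, Finset.prod_insert hj]
    have hcard : ∀ j : ι, L.length < (if j ∈ A then A.erase j else insert j A).card := by
      intro j
      by_cases hj : j ∈ A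
      · rw [if_pos hj, Finset.card_erase_of_mem hj]; omega
      · rw [if_neg hj, Finset.card_insert_of_notMem hj]; omega
    calc ∑ ε : ι → Bool,
          ((f :: L).map (fun g => (∑ j : ι, g.1 j * sg (ε j)) - g.2)).prod * ∏ j ∈ A, sg (ε j)
        = ∑ ε : ι → Bool,
            ((∑ j : ι, f.1 j *
                ((L.map (fun g => (∑ a : ι, g.1 a * sg (ε a)) - g.2)).prod
                  * (sg (ε j) * ∏ a ∈ A, sg (ε a))))
              - f.2 * ((L.map (fun g => (∑ a : ι, g.1 a * sg (ε a)) - g.2)).prod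
                  * ∏ a ∈ A, sg (ε a))) := by
          refine Finset.sum_congr rfl (fun ε _ => ?_)
          rw [List.map_cons, List.prod_cons]
          rw [show ((∑ j : ι, f.1 j * sg (ε j)) - f.2)
                * (L.map (fun g => (∑ a : ι, g.1 a * sg (ε a)) - g.2)).prod
                * ∏ j ∈ A, sg (ε j)
              = (∑ j : ι, f.1 j * sg (ε j))
                  * ((L.map (fun g => (∑ a : ι, g.1 a * sg (ε a)) - g.2)).prod
                    * ∏ j ∈ A, sg (ε j))
                - f.2 * ((L.map (fun g => (∑ a : ι, g.1 a * sg (ε a)) - g.2)).prod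
                    * ∏ j ∈ A, sg (ε j)) from by ring]
          rw [Finset.sum_mul]
          congr 1
          exact Finset.sum_congr rfl (fun j _ => by ring)
      _ = (∑ ε : ι → Bool, ∑ j : ι, f.1 j *
              ((L.map (fun g => (∑ a : ι, g.1 a * sg (ε a)) - g.2)).prod
                * (sg (ε j) * ∏ a ∈ A, sg (ε a))))
            - ∑ ε : ι → Bool, f.2 *
              ((L.map (fun g => (∑ a : ι, g.1 a * sg (ε a)) - g.2)).prod
                * ∏ a ∈ A, sg (ε a)) := by
          rw [Finset.sum_sub_distrib]
      _ = (∑ j : ι, f.1 j * (∑ ε : ι → Bool,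
              (L.map (fun g => (∑ a : ι, g.1 a * sg (ε a)) - g.2)).prod
                * ∏ a ∈ (if j ∈ A then A.erase j else insert j A), sg (ε a)))
            - f.2 * ∑ ε : ι → Bool,
              (L.map (fun g => (∑ a : ι, g.1 a * sg (ε a)) - g.2)).prod
                * ∏ a ∈ A, sg (ε a) := by
          rw [Finset.sum_comm, ← Finset.mul_sum]
          congr 1
          refine Finset.sum_congr rfl (fun j _ => ?_)
          rw [Finset.mul_sum]
          refine Finset.sum_congr rfl (fun ε _ => ?_)
          rw [hswap j ε]
      _ = 0 := by
          rw [ih A hA']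
          have hz : ∀ j : ι,
              ∑ ε : ι → Bool,
                (L.map (fun g => (∑ a : ι, g.1 a * sg (ε a)) - g.2)).prod
                  * ∏ a ∈ (if j ∈ A then A.erase j else insert j A), sg (ε a) = 0 :=
            fun j => ih _ (hcard j)
          simp [hz]

lemma af {ι τ : Type*} [Fintype ι] [DecidableEq ι] [Fintype τ]
    (w : τ → ι → ℝ) (ν : τ → ℝ) (x : ι → ℝ)
    (hx : ∀ j, x j = 1 ∨ x j = -1)
    (havoid : ∀ t, ∑ j, w t j * x j ≠ ν t)
    (hcover : ∀ y : ι → ℝ, (∀ j, y j = 1 ∨ y j = -1) → y ≠ x → ∃ t, ∑ j, w t j * y j = ν t) :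
    Fintype.card ι ≤ Fintype.card τ := by
  by_contra hcon
  push_neg at hcon
  set L : List ((ι → ℝ) × ℝ) :=
    (Finset.univ : Finset τ).toList.map (fun t => (fun j => w t j * x j, ν t)) with hL
  have hlen : L.length = Fintype.card τ := by simp [hL]
  have hzero := af_aux L (Finset.univ : Finset ι) (by rw [hlen]; simpa using hcon)
  have hterm : ∀ ε : ι → Bool, ε ≠ (fun _ => false) →
      (L.map (fun g => (∑ j : ι, g.1 j * sg (ε j)) - g.2)).prod = 0 := by
    intro ε hε
    set y : ι → ℝ := fun j => sg (ε j) * x j with hy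
    have hycube : ∀ j, y j = 1 ∨ y j = -1 := by
      intro j; rcases hx j with h | h <;> cases hj : ε j <;> simp [hy, sg, hj, h]
    have hyx : y ≠ x := by
      intro hcontra
      apply hε; funext j
      have hj := congrFun hcontra j
      rcases hx j with h | h <;> cases hjv : ε j <;> simp [hy, sg, hjv, h] at hj ⊢ <;> linarith
    obtain ⟨t, ht⟩ := hcover y hycube hyx
    apply List.prod_eq_zero
    simp only [List.mem_map]
    refine ⟨(fun j => w t j * x j, ν t), ?_, ?_⟩
    · rw [hL, List.mem_map]
      exact ⟨t, by simp, rfl⟩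
    · have he : ∑ j : ι, (w t j * x j) * sg (ε j) = ∑ j : ι, w t j * y j :=
        Finset.sum_congr rfl (fun j _ => by simp [hy]; ring)
      simp only [he, ht, sub_self]
  set F : (ι → Bool) → ℝ := fun ε =>
    (L.map (fun g => (∑ j : ι, g.1 j * sg (ε j)) - g.2)).prod
      * ∏ j ∈ (Finset.univ : Finset ι), sg (ε j) with hF
  have hbase : F (fun _ : ι => false) ≠ 0 := by
    simp only [hF]
    have h1 : ∏ j ∈ (Finset.univ : Finset ι), sg ((fun _ : ι => false) j) = 1 := by
      simp [sg]
    rw [h1, mul_one]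
    apply List.prod_ne_zero
    intro hmem
    rw [List.mem_map] at hmem
    obtain ⟨g, hg, hg0⟩ := hmem
    rw [hL, List.mem_map] at hg
    obtain ⟨t, _, rfl⟩ := hg
    apply havoid t
    have : ∑ j : ι, (w t j * x j) * sg false = ∑ j : ι, w t j * x j :=
      Finset.sum_congr rfl (fun j _ => by simp [sg])
    rw [this] at hg0
    linarith [hg0]
  have hsingle : ∑ ε : ι → Bool, F ε = F (fun _ : ι => false) :=
    Finset.sum_eq_single_of_mem (fun _ : ι => false) (Finset.mem_univ _)
      (fun ε _ hne => by simp only [hF]; rw [hterm ε hne, zero_mul])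
  exact hbase (hsingle ▸ hzero)

lemma glue {n k : ℕ} (v : Fin k → Fin n → ℝ) (μ : Fin k → ℝ)
    (hE1 : ∀ x : Fin n → ℝ, (∀ j, x j = 1 ∨ x j = -1) → ∃ i, ∑ j, v i j * x j = μ i)
    (i : Fin k) (x : Fin n → ℝ) (hxcube : ∀ j, x j = 1 ∨ x j = -1)
    (hxi : ∑ j, v i j * x j = μ i)
    (hxpriv : ∀ i', i' ≠ i → ∑ j, v i' j * x j ≠ μ i')
    (Q : Finset (Fin n)) (s : ℝ)
    (hQ : ∀ j ∈ Q, 0 < s * (v i j * x j)) :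
    Q.card ≤ Fintype.card {l : Fin k // l ≠ i} := by
  have hmain := af (ι := {j // j ∈ Q}) (τ := {l : Fin k // l ≠ i})
    (w := fun l j => v l.1 j.1) (ν := fun l => μ l.1 - ∑ j ∈ Qᶜ, v l.1 j * x j)
    (x := fun j => x j.1)
    (fun j => hxcube j.1)
    (by
      intro l heq
      apply hxpriv l.1 l.2
      rw [Finset.sum_coe_sort Q (fun j => v l.1 j * x j)] at heq
      have hsplit := Finset.sum_add_sum_compl Q (fun j => v l.1 j * x j)
      simp only at heq
      linarith [hsplit, heq])
    (by
      intro y hycube hyx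
      classical
      set Y : Fin n → ℝ := fun j => if h : j ∈ Q then y ⟨j, h⟩ else x j with hY
      have hYcube : ∀ j, Y j = 1 ∨ Y j = -1 := by
        intro j
        by_cases h : j ∈ Q
        · simpa [hY, h] using hycube ⟨j, h⟩
        · simpa [hY, h] using hxcube j
      have hYQ : ∀ j (h : j ∈ Q), Y j = y ⟨j, h⟩ := fun j h => by simp [hY, h]
      have hYQc : ∀ j, j ∉ Q → Y j = x j := fun j h => by simp [hY, h]
      have hterm : ∀ j ∈ Q, s * (v i j * (Y j - x j)) ≤ 0 := by
        intro j hj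
        have hq := hQ j hj
        have hYj : Y j = y ⟨j, hj⟩ := hYQ j hj
        rcases hycube ⟨j, hj⟩ with h1 | h1 <;> rcases hxcube j with h2 | h2 <;>
          rw [h2] at hq <;> rw [hYj, h1, h2] <;> nlinarith [hq]
      have hex : ∃ j₀ ∈ Q, s * (v i j₀ * (Y j₀ - x j₀)) < 0 := by
        have hne : ¬ (∀ j : {j // j ∈ Q}, y j = x j.1) := by
          intro hall; exact hyx (funext hall)
        push_neg at hne
        obtain ⟨j₀, hj₀⟩ := hne
        have hq := hQ j₀.1 j₀.2
        have hYj : Y j₀.1 = y j₀ := hYQ j₀.1 j₀.2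
        refine ⟨j₀.1, j₀.2, ?_⟩
        rcases hycube j₀ with h1 | h1 <;> rcases hxcube j₀.1 with h2 | h2 <;>
          rw [h2] at hq <;> rw [hYj, h1, h2] <;>
          first
            | (exact absurd (h1.trans h2.symm) hj₀)
            | nlinarith [hq]
      have hsum : ∑ j ∈ Q, s * (v i j * (Y j - x j)) < 0 := by
        obtain ⟨j₀, hj₀Q, hj₀⟩ := hex
        calc ∑ j ∈ Q, s * (v i j * (Y j - x j)) < ∑ j ∈ Q, (0:ℝ) :=
              Finset.sum_lt_sum hterm ⟨j₀, hj₀Q, hj₀⟩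
          _ = 0 := by simp
      have hdiff : ∑ j : Fin n, v i j * Y j ≠ μ i := by
        intro hcon
        have e0 : ∀ j ∈ Qᶜ, v i j * Y j - v i j * x j = 0 := by
          intro j hj
          rw [hYQc j (by simpa using hj)]; ring
        have e1 := Finset.sum_add_sum_compl Q (fun j => v i j * Y j - v i j * x j)
        have e2 : ∑ j ∈ Qᶜ, (v i j * Y j - v i j * x j) = 0 := Finset.sum_eq_zero e0
        have e3 : ∑ j : Fin n, (v i j * Y j - v i j * x j)
            = ∑ j : Fin n, v i j * Y j - ∑ j : Fin n, v i j * x j := Finset.sum_sub_distrib _ _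
        have e5 : ∑ j ∈ Q, (v i j * Y j - v i j * x j) = 0 := by
          rw [e2, add_zero, e3, hxi, hcon] at e1
          simpa using e1
        have e4 : ∑ j ∈ Q, s * (v i j * (Y j - x j))
            = s * ∑ j ∈ Q, (v i j * Y j - v i j * x j) := by
          rw [Finset.mul_sum]
          exact Finset.sum_congr rfl (fun j _ => by ring)
        rw [e5, mul_zero] at e4
        linarith [hsum, e4]
      obtain ⟨l, hl⟩ := hE1 Y hYcube
      have hli : l ≠ i := fun h => hdiff (h ▸ hl)
      refine ⟨⟨l, hli⟩, ?_⟩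
      show ∑ j : {j // j ∈ Q}, v l j.1 * y j = μ l - ∑ j ∈ Qᶜ, v l j * x j
      have g1 : ∑ j : {j // j ∈ Q}, v l j.1 * y j = ∑ j ∈ Q, v l j * Y j := by
        rw [← Finset.sum_coe_sort Q (fun j => v l j * Y j)]
        exact Finset.sum_congr rfl (fun j _ => by rw [hYQ j.1 j.2])
      have g2 : ∑ j ∈ Qᶜ, v l j * Y j = ∑ j ∈ Qᶜ, v l j * x j :=
        Finset.sum_congr rfl (fun j hj => by rw [hYQc j (by simpa using hj)])
      have g3 := Finset.sum_add_sum_compl Q (fun j => v l j * Y j)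
      rw [g1]
      linarith [g3, hl, g2])
  simpa using hmain

end AuxLemmas

/-- Linial–Radhakrishnan: in an essential cover of `{±1}^n` by `k` hyperplanes, every
hyperplane equation has at most `2k` nonzero coefficients. -/
theorem stmt_5 (n k : ℕ) (v : Fin k → Fin n → ℝ) (μ : Fin k → ℝ)
    (hne : ∀ i, v i ≠ 0)
    (hcover : IsEssentialCover n v μ) :
    ∀ i, (Finset.univ.filter (fun j => v i j ≠ 0)).card ≤ 2 * k := by
  intro i
  obtain ⟨hE1, hE2, hE3⟩ := hcover
  obtain ⟨x, hxcube, hxi, hxpriv⟩ := hE3 i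
  classical
  set P : Finset (Fin n) := Finset.univ.filter (fun j => 0 < v i j * x j) with hP
  set N : Finset (Fin n) := Finset.univ.filter (fun j => v i j * x j < 0) with hN
  have hsub : Finset.univ.filter (fun j => v i j ≠ 0) ⊆ P ∪ N := by
    intro j hj
    simp only [hP, hN, Finset.mem_filter, Finset.mem_union, Finset.mem_univ, true_and] at hj ⊢
    have hxj : x j ≠ 0 := by rcases hxcube j with h | h <;> rw [h] <;> norm_num
    rcases lt_trichotomy (v i j * x j) 0 with h | h | h
    · right; exact h
    · exact absurd h (mul_ne_zero hj hxj)
    · left; exact h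
  have hPcard : P.card ≤ Fintype.card {l : Fin k // l ≠ i} := by
    apply glue v μ hE1 i x hxcube hxi hxpriv P 1
    intro j hj
    rw [hP, Finset.mem_filter] at hj
    linarith [hj.2]
  have hNcard : N.card ≤ Fintype.card {l : Fin k // l ≠ i} := by
    apply glue v μ hE1 i x hxcube hxi hxpriv N (-1)
    intro j hj
    rw [hN, Finset.mem_filter] at hj
    nlinarith [hj.2]
  have hsc : Fintype.card {l : Fin k // l ≠ i} = k - 1 := by
    rw [Fintype.card_subtype_compl, Fintype.card_subtype_eq, Fintype.card_fin]
  have hk : 1 ≤ k := i.pos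
  calc (Finset.univ.filter (fun j => v i j ≠ 0)).card
      ≤ (P ∪ N).card := Finset.card_le_card hsub
    _ ≤ P.card + N.card := Finset.card_union_le _ _
    _ ≤ 2 * k := by omega
end

section
/- Let V ∈ ℝ^{ℓ×m} be a matrix with rows v_1, ..., v_ℓ, each of ℓ2-norm 1, and columns v_{*1}, ..., v_{*m}. Let θ ≥ 0 be a real satisfying θ·‖v_{*j}‖_1 ≤ 1/3 for all j ∈ [m]. Then for any μ ∈ ℝ^ℓ there exists y ∈ ℝ^m with ‖y‖_∞ ≤ 1/3 and |⟨v_i, y⟩ − μ_i| ≥ θ for all i ∈ [ℓ]. -/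
/-- Corollary of Bang's lemma: if `V ∈ ℝ^{ℓ×m}` has rows `v i` of ℓ2-norm 1 and `θ ≥ 0`
satisfies `θ‖v_{*j}‖₁ ≤ 1/3` for every column `j`, then for any `μ ∈ ℝ^ℓ` there is a point
`y` with `‖y‖_∞ ≤ 1/3` and `|⟨v i, y⟩ - μ i| ≥ θ` for all `i`. -/
theorem stmt_8 (l m : ℕ) (V : Fin l → Fin m → ℝ)
    (hrow : ∀ i, Real.sqrt (∑ j, (V i j) ^ 2) = 1)
    (θ : ℝ) (hθ : 0 ≤ θ)
    (hcol : ∀ j : Fin m, θ * (∑ i, |V i j|) ≤ 1/3)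
    (μ : Fin l → ℝ) :
    ∃ y : Fin m → ℝ, (∀ j, |y j| ≤ 1/3) ∧ ∀ i, θ ≤ |(∑ j, V i j * y j) - μ i| := by
  -- rows have squared norm 1
  have hrow2 : ∀ i, (∑ j, (V i j) ^ 2) = 1 := by
    intro i
    have h := hrow i
    have hnn : (0:ℝ) ≤ ∑ j, (V i j) ^ 2 := Finset.sum_nonneg fun j _ => sq_nonneg _
    nlinarith [Real.sq_sqrt hnn, h]
  -- sign function
  set s : Bool → ℝ := fun b => if b then 1 else -1 with hs
  have habs : ∀ b, |s b| = 1 := by intro b; cases b <;> simp [hs]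
  have hsq : ∀ b, s b * s b = 1 := by intro b; cases b <;> norm_num [hs]
  have hnot : ∀ b, s (!b) = - s b := by intro b; cases b <;> simp [hs]
  set y : (Fin l → Bool) → Fin m → ℝ := fun ε j => θ * ∑ i, s (ε i) * V i j with hy
  set g : (Fin l → Bool) → ℝ :=
    fun ε => (∑ j, (y ε j) ^ 2) - 2 * θ * ∑ i, s (ε i) * μ i with hg
  obtain ⟨ε, hmax⟩ := Finite.exists_max g
  refine ⟨y ε, ?_, ?_⟩
  · intro j
    calc |y ε j| = |θ| * |∑ i, s (ε i) * V i j| := abs_mul _ _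
    _ ≤ θ * ∑ i, |s (ε i) * V i j| := by
        rw [abs_of_nonneg hθ]
        exact mul_le_mul_of_nonneg_left (Finset.abs_sum_le_sum_abs _ _) hθ
    _ = θ * ∑ i, |V i j| := by
        congr 1; exact Finset.sum_congr rfl fun i _ => by rw [abs_mul, habs, one_mul]
    _ ≤ 1/3 := hcol j
  · intro i
    rcases eq_or_lt_of_le hθ with h0 | hpos
    · exact h0 ▸ abs_nonneg ((∑ j, V i j * y ε j) - μ i)
    set c := s (ε i) with hc
    set ε' := Function.update ε i (!ε i) with hε'
    -- key: flipping coordinate i changes any signed sum by -2 c * f i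
    have key : ∀ f : Fin l → ℝ,
        (∑ i', s (ε' i') * f i') = (∑ i', s (ε i') * f i') - 2 * c * f i := by
      intro f
      have hfun : (fun i' => s (ε' i') * f i')
          = Function.update (fun i' => s (ε i') * f i') i (- c * f i) := by
        funext i'
        by_cases h : i' = i
        · subst h
          simp [hε', Function.update_self, hnot, hc]
        · simp [hε', Function.update_of_ne h]
      rw [hfun, Finset.sum_update_of_mem (Finset.mem_univ i),
        Finset.sum_sdiff_eq_sub (Finset.subset_univ {i}), Finset.sum_singleton]
      ring
    have hkey' : ∀ j, y ε' j = y ε j - 2 * θ * c * V i j := by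
      intro j
      simp only [hy]
      rw [key (fun i' => V i' j)]
      ring
    have hsum : ∑ j, (y ε' j) ^ 2
        = (∑ j, (y ε j) ^ 2) - 4*θ*c*(∑ j, V i j * y ε j)
          + 4*θ^2*(c*c)*(∑ j, (V i j)^2) := by
      rw [Finset.mul_sum, Finset.mul_sum, ← Finset.sum_sub_distrib, ← Finset.sum_add_distrib]
      exact Finset.sum_congr rfl fun j _ => by rw [hkey']; ring
    have hT : (∑ i', s (ε' i') * μ i') = (∑ i', s (ε i') * μ i') - 2 * c * μ i := key μ
    have hcc : c * c = 1 := hsq _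
    have hle : g ε' ≤ g ε := hmax ε'
    have hgeq : g ε' = g ε - 4*θ*c*((∑ j, V i j * y ε j) - μ i) + 4*θ^2 := by
      simp only [hg, hsum, hT, hcc, hrow2 i]
      ring
    have h1 : θ ≤ c * ((∑ j, V i j * y ε j) - μ i) := by nlinarith
    calc θ ≤ c * ((∑ j, V i j * y ε j) - μ i) := h1
    _ ≤ |c * ((∑ j, V i j * y ε j) - μ i)| := le_abs_self _
    _ = |(∑ j, V i j * y ε j) - μ i| := by rw [abs_mul, habs, one_mul]
end

section
/- Let h_1, ..., h_k with h_i = {x ∈ ℝ^n : ⟨v_i, x⟩ = μ_i} be an essential cover of {±1}^n, let K_1 ⊊ [k], and let N_1, N_2 partition [n] such that v_i restricted to N_1 is the zero vector for every i ∈ K_1. Then there exists w̃ ∈ {±1}^{N_2} such that every w ∈ {±1}^n with w restricted to N_2 equal to w̃ satisfies ⟨v_i, w⟩ ≠ μ_i for all i ∈ K_1. -/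
/-- If `h_1, ..., h_k` is an essential cover of `{±1}^n`, `K₁ ⊊ [k]`, and `N₁ ⊔ N₂ = [n]` is a
partition such that `v i` vanishes on `N₁` for all `i ∈ K₁`, then there is an assignment
`wt ∈ {±1}^{N₂}` such that any vertex `w ∈ {±1}^n` agreeing with `wt` on `N₂` avoids all the
hyperplanes `h i` with `i ∈ K₁`. -/
theorem stmt_17 (n k : ℕ) (v : Fin k → Fin n → ℝ) (μ : Fin k → ℝ)
    (hcover : IsEssentialCover n v μ)
    (K₁ : Finset (Fin k)) (hK₁ : K₁ ≠ Finset.univ)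
    (N₁ N₂ : Finset (Fin n)) (hdisj : Disjoint N₁ N₂) (hunion : N₁ ∪ N₂ = Finset.univ)
    (hzero : ∀ i ∈ K₁, ∀ j ∈ N₁, v i j = 0) :
    ∃ wt : Fin n → ℝ, (∀ j ∈ N₂, wt j = 1 ∨ wt j = -1) ∧
      ∀ w : Fin n → ℝ, (∀ j, w j = 1 ∨ w j = -1) → (∀ j ∈ N₂, w j = wt j) →
        ∀ i ∈ K₁, ∑ j, v i j * w j ≠ μ i := by
  obtain ⟨i₀, hi₀⟩ : ∃ i₀, i₀ ∉ K₁ := by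
    by_contra h
    push_neg at h
    exact hK₁ (Finset.eq_univ_iff_forall.mpr h)
  obtain ⟨x, hx, -, hx3⟩ := hcover.2.2 i₀
  refine ⟨x, fun j _ => hx j, fun w hw hagree i hi => ?_⟩
  have key : ∑ j, v i j * w j = ∑ j, v i j * x j := by
    apply Finset.sum_congr rfl
    intro j _
    rcases Finset.mem_union.mp (hunion ▸ Finset.mem_univ j) with hj | hj
    · rw [hzero i hi j hj]; ring
    · rw [hagree j hj]
  rw [key]
  exact hx3 i (fun h => hi₀ (h ▸ hi))
end
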